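/- Let a finite discounted MDP be given with state space S, action space A, transition kernel T, reward function r : S × A → [0,1], and discount factor γ ∈ (0,1). Let π^E and π be deterministic policies. Then for every start state s ∈ S, the imitation gap satisfies V^{π^E}(s) − V^π(s) ≤ (1/(1−γ)²) · Σ_{s'∈S} d_s^{π^E}(s') · 𝟙[π(s') ≠ π^E(s')], where d_s^{π^E}(s') = (1−γ) Σ_{t=0}^∞ γ^t (P_{π^E}^t)_{s,s'} is the normalized discounted state-visitation distribution of π^E from s. -/

import Mathlib

open scoped BigOperators
set_option linter.unusedSectionVars false

/-- The row-stochastic matrix induced by a deterministic policy `π` on a transition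
kernel `T`: `(P_π)_{s,s'} = T(s'|s,π(s))`. -/
noncomputable def polMatrix {S A : Type*} [Fintype S]
    (T : S → A → S → ℝ) (π : S → A) : Matrix S S ℝ :=
  fun s s' => T s (π s) s'

/-- The value function of a deterministic policy `π`:
`V^π(s) = Σ_{t=0}^∞ γ^t Σ_{s'} (P_π^t)_{s,s'} r(s',π(s'))`. -/
noncomputable def valueFn {S A : Type*} [Fintype S] [DecidableEq S]
    (T : S → A → S → ℝ) (r : S → A → ℝ) (γ : ℝ) (π : S → A) (s : S) : ℝ :=
  ∑' t : ℕ, γ ^ t * ∑ s', (polMatrix T π ^ t) s s' * r s' (π s')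

section helpers
variable {S A : Type*} [Fintype S] [DecidableEq S]
variable (T : S → A → S → ℝ)

lemma pmat_nonneg (hT0 : ∀ s a s', 0 ≤ T s a s') (ρ : S → A) :
    ∀ (t : ℕ) (i j : S), 0 ≤ (polMatrix T ρ ^ t) i j := by
  intro t
  induction t with
  | zero =>
    intro i j; rw [pow_zero]
    by_cases h : i = j <;> simp [Matrix.one_apply, h]
  | succ t ih =>
    intro i j
    rw [pow_succ, Matrix.mul_apply]
    exact Finset.sum_nonneg fun k _ => mul_nonneg (ih i k) (hT0 _ _ _)

lemma pmat_rowsum (hT1 : ∀ s a, ∑ s', T s a s' = 1) (ρ : S → A) :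
    ∀ (t : ℕ) (i : S), ∑ j, (polMatrix T ρ ^ t) i j = 1 := by
  intro t
  induction t with
  | zero => intro i; simp [Matrix.one_apply]
  | succ t ih =>
    intro i
    simp only [pow_succ, Matrix.mul_apply]
    rw [Finset.sum_comm]
    have h : ∀ k ∈ Finset.univ, (∑ j, (polMatrix T ρ ^ t) i k * polMatrix T ρ k j)
        = (polMatrix T ρ ^ t) i k := by
      intro k _
      rw [← Finset.mul_sum]
      have : ∑ j, polMatrix T ρ k j = 1 := hT1 k (ρ k)
      rw [this, mul_one]
    rw [Finset.sum_congr rfl h, ih]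

lemma pmat_entry_le_one (hT0 : ∀ s a s', 0 ≤ T s a s') (hT1 : ∀ s a, ∑ s', T s a s' = 1)
    (ρ : S → A) (t : ℕ) (i j : S) : (polMatrix T ρ ^ t) i j ≤ 1 := by
  have := Finset.single_le_sum (f := fun j => (polMatrix T ρ ^ t) i j)
    (fun k _ => pmat_nonneg T hT0 ρ t i k) (Finset.mem_univ j)
  rw [pmat_rowsum T hT1 ρ t i] at this
  exact this

lemma wsum_nonneg (w f : S → ℝ) (hw : ∀ j, 0 ≤ w j) (hf : ∀ j, 0 ≤ f j) :
    0 ≤ ∑ j, w j * f j :=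
  Finset.sum_nonneg fun j _ => mul_nonneg (hw j) (hf j)

lemma wsum_le (w f : S → ℝ) (M : ℝ) (hw : ∀ j, 0 ≤ w j) (hws : ∑ j, w j = 1)
    (hf : ∀ j, f j ≤ M) : ∑ j, w j * f j ≤ M := by
  calc ∑ j, w j * f j ≤ ∑ j, w j * M :=
        Finset.sum_le_sum fun j _ => mul_le_mul_of_nonneg_left (hf j) (hw j)
    _ = M := by rw [← Finset.sum_mul, hws, one_mul]

lemma summable_of_le_geom {γ : ℝ} (hγ0 : 0 < γ) (hγ1 : γ < 1) {f : ℕ → ℝ} (C : ℝ)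
    (h : ∀ t, |f t| ≤ C * γ ^ t) : Summable f := by
  apply Summable.of_abs
  apply Summable.of_nonneg_of_le (fun t => abs_nonneg _) h
  exact (summable_geometric_of_lt_one hγ0.le hγ1).mul_left C

lemma g_nonneg (hT0 : ∀ s a s', 0 ≤ T s a s')
    (r : S → A → ℝ) (hr0 : ∀ s a, 0 ≤ r s a) (γ : ℝ) (hγ0 : 0 < γ)
    (ρ : S → A) (t : ℕ) (s : S) :
    0 ≤ γ ^ t * ∑ s', (polMatrix T ρ ^ t) s s' * r s' (ρ s') :=
  mul_nonneg (pow_nonneg hγ0.le t)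
    (wsum_nonneg _ _ (fun j => pmat_nonneg T hT0 ρ t s j) (fun j => hr0 j (ρ j)))

lemma g_le (hT0 : ∀ s a s', 0 ≤ T s a s') (hT1 : ∀ s a, ∑ s', T s a s' = 1)
    (r : S → A → ℝ) (hr1 : ∀ s a, r s a ≤ 1) (γ : ℝ) (hγ0 : 0 < γ)
    (ρ : S → A) (t : ℕ) (s : S) :
    γ ^ t * ∑ s', (polMatrix T ρ ^ t) s s' * r s' (ρ s') ≤ γ ^ t := by
  have := wsum_le (fun j => (polMatrix T ρ ^ t) s j) (fun j => r j (ρ j)) 1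
    (fun j => pmat_nonneg T hT0 ρ t s j) (pmat_rowsum T hT1 ρ t s)
    (fun j => hr1 j (ρ j))
  calc γ ^ t * ∑ s', (polMatrix T ρ ^ t) s s' * r s' (ρ s') ≤ γ ^ t * 1 :=
        mul_le_mul_of_nonneg_left this (pow_nonneg hγ0.le t)
    _ = γ ^ t := mul_one _

lemma g_summable (hT0 : ∀ s a s', 0 ≤ T s a s') (hT1 : ∀ s a, ∑ s', T s a s' = 1)
    (r : S → A → ℝ) (hr0 : ∀ s a, 0 ≤ r s a) (hr1 : ∀ s a, r s a ≤ 1)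
    (γ : ℝ) (hγ0 : 0 < γ) (hγ1 : γ < 1) (ρ : S → A) (s : S) :
    Summable (fun t => γ ^ t * ∑ s', (polMatrix T ρ ^ t) s s' * r s' (ρ s')) := by
  apply summable_of_le_geom hγ0 hγ1 1
  intro t
  rw [one_mul, abs_of_nonneg (g_nonneg T hT0 r hr0 γ hγ0 ρ t s)]
  exact g_le T hT0 hT1 r hr1 γ hγ0 ρ t s

lemma valueFn_nonneg (hT0 : ∀ s a s', 0 ≤ T s a s')
    (r : S → A → ℝ) (hr0 : ∀ s a, 0 ≤ r s a) (γ : ℝ) (hγ0 : 0 < γ)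
    (ρ : S → A) (s : S) : 0 ≤ valueFn T r γ ρ s :=
  tsum_nonneg (fun t => g_nonneg T hT0 r hr0 γ hγ0 ρ t s)

lemma valueFn_le (hT0 : ∀ s a s', 0 ≤ T s a s') (hT1 : ∀ s a, ∑ s', T s a s' = 1)
    (r : S → A → ℝ) (hr0 : ∀ s a, 0 ≤ r s a) (hr1 : ∀ s a, r s a ≤ 1)
    (γ : ℝ) (hγ0 : 0 < γ) (hγ1 : γ < 1) (ρ : S → A) (s : S) :
    valueFn T r γ ρ s ≤ 1 / (1 - γ) := by
  have h := Summable.tsum_le_tsum (fun t => g_le T hT0 hT1 r hr1 γ hγ0 ρ t s)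
    (g_summable T hT0 hT1 r hr0 hr1 γ hγ0 hγ1 ρ s)
    (summable_geometric_of_lt_one hγ0.le hγ1)
  rwa [tsum_geometric_of_lt_one hγ0.le hγ1, inv_eq_one_div] at h

lemma bellman (hT0 : ∀ s a s', 0 ≤ T s a s') (hT1 : ∀ s a, ∑ s', T s a s' = 1)
    (r : S → A → ℝ) (hr0 : ∀ s a, 0 ≤ r s a) (hr1 : ∀ s a, r s a ≤ 1)
    (γ : ℝ) (hγ0 : 0 < γ) (hγ1 : γ < 1) (ρ : S → A) (s : S) :
    valueFn T r γ ρ s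
      = r s (ρ s) + γ * ∑ s', T s (ρ s) s' * valueFn T r γ ρ s' := by
  have hsum : ∀ s0, Summable
      (fun t => γ ^ t * ∑ s', (polMatrix T ρ ^ t) s0 s' * r s' (ρ s')) :=
    fun s0 => g_summable T hT0 hT1 r hr0 hr1 γ hγ0 hγ1 ρ s0
  rw [valueFn, Summable.tsum_eq_zero_add (hsum s)]
  have h0 : γ ^ 0 * ∑ s', (polMatrix T ρ ^ 0) s s' * r s' (ρ s') = r s (ρ s) := by
    simp [Matrix.one_apply]
  rw [h0]
  have hstep : ∀ t : ℕ,
      γ ^ (t + 1) * ∑ s', (polMatrix T ρ ^ (t + 1)) s s' * r s' (ρ s')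
      = ∑ s'', γ * (polMatrix T ρ s s''
          * (γ ^ t * ∑ s', (polMatrix T ρ ^ t) s'' s' * r s' (ρ s'))) := by
    intro t
    have hpow : ∀ s', (polMatrix T ρ ^ (t + 1)) s s'
        = ∑ s'', polMatrix T ρ s s'' * (polMatrix T ρ ^ t) s'' s' := by
      intro s'; rw [pow_succ', Matrix.mul_apply]
    simp only [hpow, Finset.sum_mul, Finset.mul_sum]
    rw [Finset.sum_comm]
    exact Finset.sum_congr rfl fun s'' _ => Finset.sum_congr rfl fun s' _ => by ring
  calc r s (ρ s) + ∑' t : ℕ, γ ^ (t + 1) * ∑ s', (polMatrix T ρ ^ (t + 1)) s s' * r s' (ρ s')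
      = r s (ρ s) + ∑' t : ℕ, ∑ s'', γ * (polMatrix T ρ s s''
          * (γ ^ t * ∑ s', (polMatrix T ρ ^ t) s'' s' * r s' (ρ s'))) := by
        rw [tsum_congr hstep]
    _ = r s (ρ s) + ∑ s'', ∑' t : ℕ, γ * (polMatrix T ρ s s''
          * (γ ^ t * ∑ s', (polMatrix T ρ ^ t) s'' s' * r s' (ρ s'))) := by
        rw [Summable.tsum_finsetSum (fun s'' _ => ((hsum s'').mul_left _).mul_left γ)]
    _ = r s (ρ s) + γ * ∑ s', T s (ρ s) s' * valueFn T r γ ρ s' := by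
        rw [Finset.mul_sum]
        congr 1
        apply Finset.sum_congr rfl
        intro s'' _
        rw [tsum_mul_left, tsum_mul_left, valueFn]
        rfl

end helpers

lemma polMatrix_apply {S A : Type*} [Fintype S] (T : S → A → S → ℝ) (ρ : S → A)
    (s s' : S) : polMatrix T ρ s s' = T s (ρ s) s' := rfl


/-- In a finite discounted MDP with rewards in `[0,1]` and `γ ∈ (0,1)`, for
deterministic policies `π^E` and `π` and every start state `s`, the imitation gap
satisfies `V^{π^E}(s) − V^π(s) ≤ (1/(1−γ)²) Σ_{s'} d_s^{π^E}(s') 𝟙[π(s') ≠ π^E(s')]`,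
where `d_s^{π^E}(s') = (1−γ) Σ_{t=0}^∞ γ^t (P_{π^E}^t)_{s,s'}`. -/
theorem stmt_9 {S A : Type*} [Fintype S] [Fintype A] [DecidableEq S] [DecidableEq A]
    (T : S → A → S → ℝ) (hT0 : ∀ s a s', 0 ≤ T s a s') (hT1 : ∀ s a, ∑ s', T s a s' = 1)
    (r : S → A → ℝ) (hr0 : ∀ s a, 0 ≤ r s a) (hr1 : ∀ s a, r s a ≤ 1)
    (γ : ℝ) (hγ0 : 0 < γ) (hγ1 : γ < 1)
    (πE π : S → A) (s : S) :
    valueFn T r γ πE s - valueFn T r γ π s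
      ≤ 1 / (1 - γ) ^ 2 *
          ∑ s', ((1 - γ) * ∑' t : ℕ, γ ^ t * (polMatrix T πE ^ t) s s') *
            (if π s' ≠ πE s' then 1 else 0) := by
  have h1γ : (0:ℝ) < 1 - γ := by linarith
  have hK0 : (0:ℝ) ≤ 1 / (1 - γ) := by positivity
  set Vπ : S → ℝ := valueFn T r γ π with hVπ
  set c : S → ℝ := fun s' =>
    r s' (πE s') + γ * ∑ s'', polMatrix T πE s' s'' * Vπ s'' - Vπ s' with hc
  set ind : S → ℝ := fun s' => if π s' ≠ πE s' then 1 else 0 with hind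
  set u : ℕ → ℝ := fun t => γ ^ t * ∑ s', (polMatrix T πE ^ t) s s' * Vπ s' with hu
  set gE : ℕ → ℝ :=
    fun t => γ ^ t * ∑ s', (polMatrix T πE ^ t) s s' * r s' (πE s') with hgE
  have hVnn : ∀ s', 0 ≤ Vπ s' := fun s' => valueFn_nonneg T hT0 r hr0 γ hγ0 π s'
  have hVle : ∀ s', Vπ s' ≤ 1 / (1 - γ) :=
    fun s' => valueFn_le T hT0 hT1 r hr0 hr1 γ hγ0 hγ1 π s'
  -- bound on c
  have hcle : ∀ s', c s' ≤ (1 / (1 - γ)) * ind s' := by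
    intro s'
    by_cases h : π s' = πE s'
    · have hb := bellman T hT0 hT1 r hr0 hr1 γ hγ0 hγ1 π s'
      rw [← hVπ] at hb
      have hceq : c s' = 0 := by
        simp only [hc, polMatrix_apply, ← h]
        linarith [hb]
      rw [hceq, hind]
      simp [h]
    · have hwr : ∑ s'', polMatrix T πE s' s'' * Vπ s'' ≤ 1 / (1 - γ) :=
        wsum_le (fun s'' => polMatrix T πE s' s'') Vπ _
          (fun j => hT0 s' (πE s') j) (hT1 s' (πE s')) hVle
      have hindeq : ind s' = 1 := by simp [hind, h]
      rw [hindeq, mul_one]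
      have hmul : γ * ∑ s'', polMatrix T πE s' s'' * Vπ s'' ≤ γ * (1 / (1 - γ)) :=
        mul_le_mul_of_nonneg_left hwr hγ0.le
      have heq : 1 + γ * (1 / (1 - γ)) = 1 / (1 - γ) := by field_simp; ring
      have := hr1 s' (πE s')
      have := hVnn s'
      simp only [hc]
      linarith
  -- summability facts
  have hgEsum : Summable gE := by
    simp only [hgE]
    exact g_summable T hT0 hT1 r hr0 hr1 γ hγ0 hγ1 πE s
  have husum : Summable u := by
    apply summable_of_le_geom hγ0 hγ1 (1 / (1 - γ))
    intro t
    have hnn : 0 ≤ u t := mul_nonneg (pow_nonneg hγ0.le t)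
      (wsum_nonneg _ _ (fun j => pmat_nonneg T hT0 πE t s j) hVnn)
    rw [abs_of_nonneg hnn]
    simp only [hu]
    calc γ ^ t * ∑ s', (polMatrix T πE ^ t) s s' * Vπ s'
        ≤ γ ^ t * (1 / (1 - γ)) := mul_le_mul_of_nonneg_left
          (wsum_le _ _ _ (fun j => pmat_nonneg T hT0 πE t s j)
            (pmat_rowsum T hT1 πE t s) hVle) (pow_nonneg hγ0.le t)
      _ = (1 / (1 - γ)) * γ ^ t := by ring
  have husucc : Summable (fun t => u (t + 1)) := (summable_nat_add_iff 1).mpr husum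
  -- one-step expansion of the middle term
  have hmid : ∀ t : ℕ,
      ∑ s', (polMatrix T πE ^ t) s s' * (γ * ∑ s'', polMatrix T πE s' s'' * Vπ s'')
      = γ * ∑ s'', (polMatrix T πE ^ (t + 1)) s s'' * Vπ s'' := by
    intro t
    have hpow : ∀ s'', (polMatrix T πE ^ (t + 1)) s s''
        = ∑ s', (polMatrix T πE ^ t) s s' * polMatrix T πE s' s'' := by
      intro s''; rw [pow_succ, Matrix.mul_apply]
    simp only [hpow, Finset.sum_mul, Finset.mul_sum]
    rw [Finset.sum_comm]
    exact Finset.sum_congr rfl fun s' _ => Finset.sum_congr rfl fun s'' _ => by ring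
  have hsplit : ∀ t : ℕ, ∑ s', (polMatrix T πE ^ t) s s' * c s'
      = (∑ s', (polMatrix T πE ^ t) s s' * r s' (πE s'))
        + (∑ s', (polMatrix T πE ^ t) s s'
            * (γ * ∑ s'', polMatrix T πE s' s'' * Vπ s''))
        - ∑ s', (polMatrix T πE ^ t) s s' * Vπ s' := by
    intro t
    rw [← Finset.sum_add_distrib, ← Finset.sum_sub_distrib]
    apply Finset.sum_congr rfl
    intro s' _
    simp only [hc]
    ring
  have hterm : ∀ t : ℕ, γ ^ t * ∑ s', (polMatrix T πE ^ t) s s' * c s'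
      = gE t + (u (t + 1) - u t) := by
    intro t
    rw [hsplit t, hmid t]
    simp only [hgE, hu]
    ring
  have hLsum : Summable (fun t => γ ^ t * ∑ s', (polMatrix T πE ^ t) s s' * c s') :=
    (hgEsum.add (husucc.sub husum)).congr (fun t => (hterm t).symm)
  have hu0 : u 0 = Vπ s := by
    simp [hu, Matrix.one_apply]
  have hVE : ∑' t, gE t = valueFn T r γ πE s := by
    simp only [hgE]; rfl
  have hkey : ∑' t : ℕ, γ ^ t * ∑ s', (polMatrix T πE ^ t) s s' * c s'
      = valueFn T r γ πE s - Vπ s := by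
    calc ∑' t : ℕ, γ ^ t * ∑ s', (polMatrix T πE ^ t) s s' * c s'
        = ∑' t : ℕ, (gE t + (u (t + 1) - u t)) := tsum_congr hterm
      _ = (∑' t, gE t) + ∑' t : ℕ, (u (t + 1) - u t) :=
          Summable.tsum_add hgEsum (husucc.sub husum)
      _ = (∑' t, gE t) + ((∑' t : ℕ, u (t + 1)) - ∑' t, u t) := by
          rw [Summable.tsum_sub husucc husum]
      _ = valueFn T r γ πE s - Vπ s := by
          rw [hVE, Summable.tsum_eq_zero_add husum, hu0]; ring
  -- indicator facts
  have hind0 : ∀ s', 0 ≤ ind s' := by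
    intro s'; simp only [hind]; split_ifs <;> norm_num
  have hind1 : ∀ s', ind s' ≤ 1 := by
    intro s'; simp only [hind]; split_ifs <;> norm_num
  -- summability of the dominating series
  have hRsum : Summable
      (fun t => γ ^ t * ∑ s', (polMatrix T πE ^ t) s s' * ((1 / (1 - γ)) * ind s')) := by
    apply summable_of_le_geom hγ0 hγ1 (1 / (1 - γ))
    intro t
    have hnn : 0 ≤ γ ^ t * ∑ s', (polMatrix T πE ^ t) s s' * ((1 / (1 - γ)) * ind s') :=
      mul_nonneg (pow_nonneg hγ0.le t)
        (wsum_nonneg _ _ (fun j => pmat_nonneg T hT0 πE t s j)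
          (fun j => mul_nonneg hK0 (hind0 j)))
    rw [abs_of_nonneg hnn]
    calc γ ^ t * ∑ s', (polMatrix T πE ^ t) s s' * ((1 / (1 - γ)) * ind s')
        ≤ γ ^ t * (1 / (1 - γ)) := mul_le_mul_of_nonneg_left
          (wsum_le _ _ _ (fun j => pmat_nonneg T hT0 πE t s j)
            (pmat_rowsum T hT1 πE t s)
            (fun j => by
              calc (1 / (1 - γ)) * ind j ≤ (1 / (1 - γ)) * 1 :=
                    mul_le_mul_of_nonneg_left (hind1 j) hK0
                _ = 1 / (1 - γ) := mul_one _)) (pow_nonneg hγ0.le t)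
      _ = (1 / (1 - γ)) * γ ^ t := by ring
  -- the comparison
  have hmono : (∑' t : ℕ, γ ^ t * ∑ s', (polMatrix T πE ^ t) s s' * c s')
      ≤ ∑' t : ℕ, γ ^ t * ∑ s', (polMatrix T πE ^ t) s s' * ((1 / (1 - γ)) * ind s') := by
    apply Summable.tsum_le_tsum _ hLsum hRsum
    intro t
    apply mul_le_mul_of_nonneg_left _ (pow_nonneg hγ0.le t)
    exact Finset.sum_le_sum fun s' _ =>
      mul_le_mul_of_nonneg_left (hcle s') (pmat_nonneg T hT0 πE t s s')
  -- evaluate the dominating series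
  have hDsum : ∀ s', Summable (fun t : ℕ => γ ^ t * (polMatrix T πE ^ t) s s') := by
    intro s'
    apply summable_of_le_geom hγ0 hγ1 1
    intro t
    rw [one_mul, abs_of_nonneg (mul_nonneg (pow_nonneg hγ0.le t)
      (pmat_nonneg T hT0 πE t s s'))]
    calc γ ^ t * (polMatrix T πE ^ t) s s' ≤ γ ^ t * 1 :=
          mul_le_mul_of_nonneg_left (pmat_entry_le_one T hT0 hT1 πE t s s')
            (pow_nonneg hγ0.le t)
      _ = γ ^ t := mul_one _
  have hRHS : (∑' t : ℕ, γ ^ t * ∑ s', (polMatrix T πE ^ t) s s' * ((1 / (1 - γ)) * ind s'))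
      = 1 / (1 - γ) ^ 2 *
          ∑ s', ((1 - γ) * ∑' t : ℕ, γ ^ t * (polMatrix T πE ^ t) s s') * ind s' := by
    have h1 : ∀ t : ℕ, γ ^ t * ∑ s', (polMatrix T πE ^ t) s s' * ((1 / (1 - γ)) * ind s')
        = ∑ s', (γ ^ t * (polMatrix T πE ^ t) s s') * ((1 / (1 - γ)) * ind s') := by
      intro t
      rw [Finset.mul_sum]
      exact Finset.sum_congr rfl fun _ _ => by ring
    rw [tsum_congr h1, Summable.tsum_finsetSum (fun s' _ => (hDsum s').mul_right _), Finset.mul_sum]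
    apply Finset.sum_congr rfl
    intro s' _
    rw [tsum_mul_right]
    have hne : (1 - γ) ≠ 0 := ne_of_gt h1γ
    field_simp
  have final : valueFn T r γ πE s - Vπ s
      ≤ 1 / (1 - γ) ^ 2 *
          ∑ s', ((1 - γ) * ∑' t : ℕ, γ ^ t * (polMatrix T πE ^ t) s s') * ind s' := by
    rw [← hkey, ← hRHS]; exact hmono
  simpa only [hind] using final
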